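/- In the polynomial ring 𝔽₃[x,y], for every positive integer e, the element (xy)^{2·3^{e−1}}·(x² − y²)^{3^{e−1}} lies in the ideal (x^{3^e}, y^{3^e}). -/
import Mathlib


open MvPolynomial

/-- In `𝔽₃[x,y]`, the element `(xy)^{2·3^{e−1}}·(x² − y²)^{3^{e−1}}` lies in the
Frobenius power `(x^{3^e}, y^{3^e})` for every `e > 0`. -/
theorem stmt8 (e : ℕ) (he : 0 < e) :
    (X 0 * X 1 : MvPolynomial (Fin 2) (ZMod 3)) ^ (2 * 3 ^ (e - 1)) *
        ((X 0) ^ 2 - (X 1) ^ 2) ^ (3 ^ (e - 1)) ∈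
      Ideal.span ({(X 0) ^ (3 ^ e), (X 1) ^ (3 ^ e)} :
        Set (MvPolynomial (Fin 2) (ZMod 3))) := by
  obtain ⟨k, rfl⟩ := Nat.exists_eq_add_of_lt he
  simp only [Nat.zero_add, Nat.add_sub_cancel]
  have h : (X 0 * X 1 : MvPolynomial (Fin 2) (ZMod 3)) ^ (2 * 3 ^ k) *
        ((X 0) ^ 2 - (X 1) ^ 2) ^ (3 ^ k)
      = (X 0) ^ (3 ^ (k + 1)) * ((X 0) ^ (3 ^ k) * (X 1) ^ (2 * 3 ^ k))
        - (X 1) ^ (3 ^ (k + 1)) * ((X 0) ^ (2 * 3 ^ k) * (X 1) ^ (3 ^ k)) := by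
    rw [sub_pow_char_pow, pow_succ]
    ring
  rw [h]
  exact sub_mem
    (Ideal.mul_mem_right _ _ (Ideal.subset_span (Set.mem_insert _ _)))
    (Ideal.mul_mem_right _ _ (Ideal.subset_span (Set.mem_insert_of_mem _ rfl)))
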